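/- A tournament reduced under the three reduction rules (no vertex outside a triangle, no arc in more than k triangles, no transitive-module reduction applicable) that admits a feedback arc set of size at most k has at most sqrt(4k^3+2k^2-k) + 2k vertices. -/

import Mathlib

/-- A tournament: irreflexive, and exactly one arc between every pair of distinct vertices. -/
def IsTournament {V : Type*} (r : V → V → Prop) : Prop :=
  (∀ v, ¬ r v v) ∧ ∀ u v : V, u ≠ v → (r u v ↔ ¬ r v u)

/-- A digraph (given by its arc relation) is acyclic: no directed cycle. -/
def Acyclic {V : Type*} (r : V → V → Prop) : Prop :=
  ∀ v, ¬ Relation.TransGen r v v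

/-- A tournament reduced under the three reduction rules that has a feedback arc set of
size at most `k` has at most `√(4k³+2k²-k) + 2k` vertices. -/
theorem stmt11 {V : Type*} [Fintype V] (r : V → V → Prop) (hT : IsTournament r) (k : ℕ)
    (h1 : ∀ v : V, ∃ a b : V, r v a ∧ r a b ∧ r b v)
    (h2 : ∀ u v : V, r u v → {w : V | r v w ∧ r w u}.ncard ≤ k)
    (h3 : ∀ M : Set V,
      (∀ x ∉ M, (∀ m ∈ M, r x m) ∨ (∀ m ∈ M, r m x)) →
      Acyclic (fun a b => r a b ∧ a ∈ M ∧ b ∈ M) →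
      (∀ M' : Set V, M ⊆ M' →
        (∀ x ∉ M', (∀ m ∈ M', r x m) ∨ (∀ m ∈ M', r m x)) →
        Acyclic (fun a b => r a b ∧ a ∈ M' ∧ b ∈ M') → M' = M) →
      M.ncard ≤ {e : V × V | (e.1 ∉ M ∧ ∀ m ∈ M, r m e.1) ∧
                             (e.2 ∉ M ∧ ∀ m ∈ M, r e.2 m) ∧ r e.1 e.2}.ncard)
    (hfas : ∃ F : Finset (V × V), F.card ≤ k ∧
      Acyclic (fun a b => r a b ∧ (a, b) ∉ F)) :
    (Fintype.card V : ℝ) ≤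
      Real.sqrt (4 * (k : ℝ) ^ 3 + 2 * (k : ℝ) ^ 2 - k) + 2 * k := by
  classical
  obtain ⟨F, hFk, hFac⟩ := hfas
  -- touched vertices
  set T : Finset V := F.image Prod.fst ∪ F.image Prod.snd with hTdef
  have hTcard : T.card ≤ 2 * k := by
    have h1' := Finset.card_image_le (s := F) (f := Prod.fst)
    have h2' := Finset.card_image_le (s := F) (f := Prod.snd)
    have h3' : T.card ≤ (F.image Prod.fst).card + (F.image Prod.snd).card :=
      Finset.card_union_le _ _
    omega
  have memT : ∀ e ∈ F, e.1 ∈ T ∧ e.2 ∈ T := by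
    intro e he
    exact ⟨Finset.mem_union_left _ (Finset.mem_image_of_mem _ he),
      Finset.mem_union_right _ (Finset.mem_image_of_mem _ he)⟩
  have noF : ∀ a b : V, (a ∉ T ∨ b ∉ T) → (a, b) ∉ F := by
    intro a b h hab
    have := memT _ hab
    simp only [Prod.fst, Prod.snd] at this
    tauto
  have no3 : ∀ a b c : V, r a b → r b c → r c a →
      (a, b) ∈ F ∨ (b, c) ∈ F ∨ (c, a) ∈ F := by
    intro a b c hab hbc hca
    by_contra h
    push_neg at h
    exact hFac a (Relation.TransGen.head ⟨hab, h.1⟩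
      (Relation.TransGen.head ⟨hbc, h.2.1⟩ (Relation.TransGen.single ⟨hca, h.2.2⟩)))
  have rtot : ∀ a b : V, a ≠ b → ¬ r a b → r b a := by
    intro a b hne h
    by_contra h2
    exact h ((hT.2 a b hne).mpr h2)
  -- in-neighborhoods within T
  set D : V → Finset V := fun u => T.filter (fun w => r w u) with hD
  have chain : ∀ u u', u ∉ T → u' ∉ T → r u u' → D u ⊆ D u' := by
    intro u u' hu hu' huu' w hw
    simp only [hD, Finset.mem_filter] at hw ⊢
    refine ⟨hw.1, ?_⟩
    by_contra hwu'
    have hwne : w ≠ u' := fun h => hu' (h ▸ hw.1)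
    have hu'w : r u' w := rtot w u' hwne hwu'
    rcases no3 w u u' hw.2 huu' hu'w with h | h | h
    · exact noF w u (Or.inr hu) h
    · exact noF u u' (Or.inl hu) h
    · exact noF u' w (Or.inl hu') h
  set Uf : Finset V := Finset.univ \ T with hUf
  set S : Finset (Finset V) := Uf.image D with hS
  set Cf : Finset V → Finset V := fun d => Uf.filter (fun u => D u = d) with hCf
  have hCfU : ∀ d, ∀ u ∈ Cf d, u ∉ T ∧ D u = d := by
    intro d u hu
    have h := Finset.mem_filter.mp hu
    exact ⟨(Finset.mem_sdiff.mp h.1).2, h.2⟩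
  -- number of classes
  have hScard : S.card ≤ T.card + 1 := by
    have hchainS : ∀ d ∈ S, ∀ d' ∈ S, d ⊆ d' ∨ d' ⊆ d := by
      intro d hd d' hd'
      obtain ⟨u, hu, rfl⟩ := Finset.mem_image.mp hd
      obtain ⟨u', hu', rfl⟩ := Finset.mem_image.mp hd'
      have hu1 : u ∉ T := (Finset.mem_sdiff.mp hu).2
      have hu'1 : u' ∉ T := (Finset.mem_sdiff.mp hu').2
      rcases eq_or_ne u u' with rfl | hne
      · exact Or.inl (le_refl _)
      rcases Classical.em (r u u') with h | h
      · exact Or.inl (chain u u' hu1 hu'1 h)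
      · exact Or.inr (chain u' u hu'1 hu1 (rtot u u' hne h))
    have hinj : Set.InjOn (fun d : Finset V => d.card) ↑S := by
      intro d hd d' hd' h
      simp only [Finset.mem_coe] at hd hd'
      rcases hchainS d hd d' hd' with hsub | hsub
      · exact Finset.eq_of_subset_of_card_le hsub (le_of_eq h.symm)
      · exact (Finset.eq_of_subset_of_card_le hsub (le_of_eq h)).symm
    have hmap : ∀ d ∈ S, d.card ∈ Finset.range (T.card + 1) := by
      intro d hd
      obtain ⟨u, hu, rfl⟩ := Finset.mem_image.mp hd
      exact Finset.mem_range.mpr (Nat.lt_succ_of_le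
        (Finset.card_le_card (Finset.filter_subset _ _)))
    calc S.card ≤ (Finset.range (T.card + 1)).card :=
          Finset.card_le_card_of_injOn _ hmap hinj
      _ = T.card + 1 := Finset.card_range _
  -- key per-class lemma
  have key : ∀ d : Finset V, ∃ Af : Finset (V × V), d ∈ S →
      (Af ⊆ F ∧ (Cf d).card ≤ Af.card ∧
        ∀ e ∈ Af, r e.1 e.2 ∧ ∀ u ∈ Cf d, r e.2 u ∧ r u e.1) := by
    intro d
    by_cases hd : d ∈ S
    swap
    · exact ⟨∅, fun h => absurd h hd⟩
    have hCne : (Cf d).Nonempty := by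
      obtain ⟨u, hu, rfl⟩ := Finset.mem_image.mp hd
      exact ⟨u, Finset.mem_filter.mpr ⟨hu, rfl⟩⟩
    -- Good predicate : transitive modules containing the class
    set Good : Finset V → Prop := fun Mf =>
      Cf d ⊆ Mf ∧
      (∀ x ∉ (↑Mf : Set V), (∀ m ∈ (↑Mf : Set V), r x m) ∨ (∀ m ∈ (↑Mf : Set V), r m x)) ∧
      Acyclic (fun a b => r a b ∧ a ∈ (↑Mf : Set V) ∧ b ∈ (↑Mf : Set V)) with hGood
    have hGoodC : Good (Cf d) := by
      refine ⟨subset_rfl, ?_, ?_⟩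
      · intro x hx
        by_contra hcon
        push_neg at hcon
        obtain ⟨⟨u, hu, hxu⟩, ⟨u', hu', hu'x⟩⟩ := hcon
        simp only [Finset.mem_coe] at hu hu' hx
        have hxune : x ≠ u := fun h => hx (h ▸ hu)
        have hxu'ne : x ≠ u' := fun h => hx (h ▸ hu')
        have hux : r u x := rtot x u hxune hxu
        have hxu' : r x u' := rtot u' x (Ne.symm hxu'ne) hu'x
        rcases Classical.em (x ∈ T) with hxT | hxT
        · have hmem : x ∈ D u' := Finset.mem_filter.mpr ⟨hxT, hxu'⟩
          rw [(hCfU d u' hu').2, ← (hCfU d u hu).2] at hmem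
          exact hxu (Finset.mem_filter.mp hmem).2
        · have hA : D u ⊆ D x := chain u x (hCfU d u hu).1 hxT hux
          have hB : D x ⊆ D u' := chain x u' hxT (hCfU d u' hu').1 hxu'
          have hDx : D x = d := by
            apply subset_antisymm
            · rw [← (hCfU d u' hu').2]; exact hB
            · rw [← (hCfU d u hu).2]; exact hA
          exact hx (Finset.mem_coe.mpr
            (Finset.mem_filter.mpr ⟨Finset.mem_sdiff.mpr ⟨Finset.mem_univ x, hxT⟩, hDx⟩))
      · exact fun v hv => hFac v (Relation.TransGen.mono
          (fun a b hab => ⟨hab.1, noF a b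
            (Or.inl (hCfU d a (Finset.mem_coe.mp hab.2.1)).1)⟩) v v hv)
    -- maximizer
    obtain ⟨Mf, hMfmem, hMfmax⟩ := Finset.exists_max_image
      (Finset.univ.filter Good) Finset.card
      ⟨Cf d, Finset.mem_filter.mpr ⟨Finset.mem_univ _, hGoodC⟩⟩
    have hMfGood : Good Mf := (Finset.mem_filter.mp hMfmem).2
    obtain ⟨hCM, hmod, hacy⟩ := hMfGood
    set M : Set V := (↑Mf : Set V) with hM
    have hmaxcond : ∀ M' : Set V, M ⊆ M' →
        (∀ x ∉ M', (∀ m ∈ M', r x m) ∨ (∀ m ∈ M', r m x)) →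
        Acyclic (fun a b => r a b ∧ a ∈ M' ∧ b ∈ M') → M' = M := by
      intro M' hMM' hmod' hacy'
      have hfin : M'.Finite := Set.toFinite M'
      have hcoe : (↑hfin.toFinset : Set V) = M' := hfin.coe_toFinset
      have hGood' : Good hfin.toFinset := by
        refine ⟨?_, ?_, ?_⟩
        · intro u hu
          rw [← Finset.mem_coe, hcoe]
          exact hMM' (Finset.mem_coe.mpr (hCM hu))
        · rw [hcoe]; exact hmod'
        · rw [hcoe]; exact hacy'
      have hcard : hfin.toFinset.card ≤ Mf.card :=
        hMfmax _ (Finset.mem_filter.mpr ⟨Finset.mem_univ _, hGood'⟩)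
      have hn1 : M'.ncard ≤ M.ncard := by
        rw [Set.ncard_eq_toFinset_card M' hfin, hM, Set.ncard_coe_finset]
        exact hcard
      exact (Set.eq_of_subset_of_ncard_le hMM' hn1 hfin).symm
    have hh3 := h3 M hmod hacy hmaxcond
    set A : Set (V × V) := {e : V × V | (e.1 ∉ M ∧ ∀ m ∈ M, r m e.1) ∧
        (e.2 ∉ M ∧ ∀ m ∈ M, r e.2 m) ∧ r e.1 e.2} with hA
    obtain ⟨m₀, hm₀⟩ := hCne
    have hm₀M : m₀ ∈ M := Finset.mem_coe.mpr (hCM hm₀)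
    have hm₀T : m₀ ∉ T := (hCfU d m₀ hm₀).1
    have hAF : ∀ e ∈ A, e ∈ F := by
      intro e he
      obtain ⟨⟨he1M, he1⟩, ⟨he2M, he2⟩, he12⟩ := he
      have h2m : r e.2 m₀ := he2 m₀ hm₀M
      have hm1 : r m₀ e.1 := he1 m₀ hm₀M
      rcases no3 e.1 e.2 m₀ he12 h2m hm1 with h | h | h
      · exact h
      · exact absurd h (noF _ _ (Or.inr hm₀T))
      · exact absurd h (noF _ _ (Or.inl hm₀T))
    set Af : Finset (V × V) := F.filter (fun e => e ∈ A) with hAf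
    have hAeq : A = ↑Af := by
      ext e
      simp only [hAf, Finset.coe_filter, Set.mem_setOf_eq]
      exact ⟨fun h => ⟨hAF e h, h⟩, fun h => h.2⟩
    refine ⟨Af, fun _ => ⟨Finset.filter_subset _ _, ?_, ?_⟩⟩
    · calc (Cf d).card ≤ Mf.card := Finset.card_le_card hCM
        _ = M.ncard := (Set.ncard_coe_finset Mf).symm
        _ ≤ A.ncard := hh3
        _ = Af.card := by rw [hAeq, Set.ncard_coe_finset]
    · intro e he
      have heA : e ∈ A := (Finset.mem_filter.mp he).2
      obtain ⟨⟨_, he1⟩, ⟨_, he2⟩, he12⟩ := heA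
      refine ⟨he12, fun u hu => ?_⟩
      have huM : u ∈ M := Finset.mem_coe.mpr (hCM hu)
      exact ⟨he2 u huM, he1 u huM⟩
  have keyr : ∀ d : Finset V, ∃ Af : Finset (V × V), d ∈ S →
      (Af ⊆ F ∧ (Cf d).card ≤ Af.card ∧
        ∀ e ∈ Af, r e.1 e.2 ∧ ∀ u ∈ Cf d, r e.2 u ∧ r u e.1) := key
  choose Af hAf using keyr
  -- the double-counting bound
  have sumsq : ∑ d ∈ S, (Cf d).card ^ 2 ≤ F.card * k := by
    have step1 : ∑ d ∈ S, (Cf d).card ^ 2 ≤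
        ∑ d ∈ S, ∑ e ∈ F, (if e ∈ Af d then (Cf d).card else 0) := by
      refine Finset.sum_le_sum ?_
      intro d hd
      obtain ⟨hAfF, hcard, _⟩ := hAf d hd
      have : ∑ e ∈ F, (if e ∈ Af d then (Cf d).card else 0) =
          ∑ e ∈ F.filter (fun e => e ∈ Af d), (Cf d).card := (Finset.sum_filter _ _).symm
      rw [this]
      have hfe : F.filter (fun e => e ∈ Af d) = Af d := by
        ext e
        simp only [Finset.mem_filter]
        exact ⟨fun h => h.2, fun h => ⟨hAfF h, h⟩⟩
      rw [hfe, Finset.sum_const, smul_eq_mul, pow_two]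
      exact Nat.mul_le_mul_right _ hcard
    rw [Finset.sum_comm] at step1
    have step2 : ∀ e ∈ F, ∑ d ∈ S, (if e ∈ Af d then (Cf d).card else 0) ≤ k := by
      intro e _
      rw [← Finset.sum_filter]
      set Sf := S.filter (fun d => e ∈ Af d) with hSf
      rcases Finset.eq_empty_or_nonempty Sf with hemp | ⟨d₀, hd₀⟩
      · rw [hemp]; simp
      · have hd₀S : d₀ ∈ S := (Finset.mem_filter.mp hd₀).1
        have hre : r e.1 e.2 := ((hAf d₀ hd₀S).2.2 e (Finset.mem_filter.mp hd₀).2).1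
        set W : Finset V := Finset.univ.filter (fun w => r e.2 w ∧ r w e.1) with hW
        have hWk : W.card ≤ k := by
          have hh := h2 e.1 e.2 hre
          have hseteq : {w : V | r e.2 w ∧ r w e.1} = ↑W := by
            ext w; simp [hW]
          rwa [hseteq, Set.ncard_coe_finset] at hh
        have hdisj : ∀ d ∈ Sf, ∀ d' ∈ Sf, d ≠ d' → Disjoint (Cf d) (Cf d') := by
          intro d _ d' _ hne
          rw [Finset.disjoint_left]
          intro u hu hu'
          exact hne (((hCfU d u hu).2).symm.trans (hCfU d' u hu').2)
        have hsub : Sf.biUnion Cf ⊆ W := by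
          intro u hu
          obtain ⟨d, hdSf, hud⟩ := Finset.mem_biUnion.mp hu
          have hdS : d ∈ S := (Finset.mem_filter.mp hdSf).1
          have hprop := ((hAf d hdS).2.2 e (Finset.mem_filter.mp hdSf).2).2 u hud
          exact Finset.mem_filter.mpr ⟨Finset.mem_univ _, hprop⟩
        calc ∑ d ∈ Sf, (Cf d).card = (Sf.biUnion Cf).card :=
              (Finset.card_biUnion hdisj).symm
          _ ≤ W.card := Finset.card_le_card hsub
          _ ≤ k := hWk
    calc ∑ d ∈ S, (Cf d).card ^ 2 ≤ _ := step1
      _ ≤ ∑ _e ∈ F, k := Finset.sum_le_sum step2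
      _ = F.card * k := by rw [Finset.sum_const, smul_eq_mul]
  -- assemble everything
  have hpart : Uf.card = ∑ d ∈ S, (Cf d).card :=
    Finset.card_eq_sum_card_fiberwise (fun u hu => Finset.mem_image_of_mem D hu)
  have hUcard : Uf.card + T.card = Fintype.card V := by
    rw [hUf, Finset.card_sdiff_add_card_eq_card (Finset.subset_univ T), Finset.card_univ]
  have hcs : ((Uf.card : ℝ)) ^ 2 ≤ (S.card : ℝ) * ∑ d ∈ S, ((Cf d).card : ℝ) ^ 2 := by
    have h := sq_sum_le_card_mul_sum_sq (s := S) (f := fun d => ((Cf d).card : ℝ))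
    have he : (Uf.card : ℝ) = ∑ d ∈ S, ((Cf d).card : ℝ) := by
      rw [hpart]; push_cast; ring
    rw [he]; exact h
  have hsum2 : ∑ d ∈ S, ((Cf d).card : ℝ) ^ 2 ≤ (k : ℝ) * k := by
    have hk2 : F.card * k ≤ k * k := Nat.mul_le_mul_right k hFk
    have hle : ∑ d ∈ S, (Cf d).card ^ 2 ≤ k * k := le_trans sumsq hk2
    calc ∑ d ∈ S, ((Cf d).card : ℝ) ^ 2
        = ((∑ d ∈ S, (Cf d).card ^ 2 : ℕ) : ℝ) := by push_cast; ring
      _ ≤ (k : ℝ) * k := by exact_mod_cast hle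
  have hScard' : (S.card : ℝ) ≤ 2 * (k : ℝ) + 1 := by
    have hs : S.card ≤ 2 * k + 1 := le_trans hScard (by omega)
    exact_mod_cast hs
  have hU2 : ((Uf.card : ℝ)) ^ 2 ≤ 4 * (k : ℝ) ^ 3 + 2 * (k : ℝ) ^ 2 - k := by
    have hx : (0 : ℝ) ≤ ∑ d ∈ S, ((Cf d).card : ℝ) ^ 2 :=
      Finset.sum_nonneg (fun _ _ => sq_nonneg _)
    have h1' : ((Uf.card : ℝ)) ^ 2 ≤ (2 * (k : ℝ) + 1) * ((k : ℝ) * k) :=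
      le_trans hcs (mul_le_mul hScard' hsum2 hx (by positivity))
    refine le_trans h1' ?_
    rcases Nat.eq_zero_or_pos k with rfl | hk
    · norm_num
    · have hk1 : (1 : ℝ) ≤ (k : ℝ) := by exact_mod_cast hk
      nlinarith [hk1]
  have hUle : (Uf.card : ℝ) ≤ Real.sqrt (4 * (k : ℝ) ^ 3 + 2 * (k : ℝ) ^ 2 - k) := by
    have h := Real.sqrt_le_sqrt hU2
    rwa [Real.sqrt_sq (by positivity : (0 : ℝ) ≤ ((Uf.card : ℕ) : ℝ))] at h
  have hfin : (Fintype.card V : ℝ) ≤ (Uf.card : ℝ) + 2 * (k : ℝ) := by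
    have hn : Fintype.card V ≤ Uf.card + 2 * k := by omega
    exact_mod_cast hn
  linarith [hUle, hfin]
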